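/- Let F = ℚ(t) be the field of rational functions in one variable over ℚ, and let σ be a field automorphism of F with σ(t) = t⁻¹ (and σ the identity on ℚ). Then for every f ∈ Fˣ one has f · σ(f) ≠ −1; that is, −1 does not belong to the subgroup N(F) = { f·σ(f) : f ∈ Fˣ }, so the class of −1 is a nontrivial element of order 2 in Fˣ/N(F). -/

import Mathlib

open Polynomial

private lemma rev_eval_one (p : ℚ[X]) : (p.reverse).eval 1 = p.eval 1 := by
  haveI : Invertible (1 : ℚ) := invertibleOne
  have h := Polynomial.eval₂_reverse_mul_pow (RingHom.id ℚ) (1 : ℚ) p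
  rw [invOf_one, one_pow, mul_one] at h
  exact h

private lemma algebraMap_eq_aeval (q : ℚ[X]) :
    algebraMap ℚ[X] (RatFunc ℚ) q = Polynomial.aeval RatFunc.X q := by
  have h : (IsScalarTower.toAlgHom ℚ ℚ[X] (RatFunc ℚ)) = Polynomial.aeval RatFunc.X :=
    Polynomial.algHom_ext (by simp [RatFunc.algebraMap_X])
  simpa using DFunLike.congr_fun h q

private lemma sigma_poly (σ : RatFunc ℚ ≃+* RatFunc ℚ)
    (hσX : σ RatFunc.X = ((RatFunc.X : RatFunc ℚ))⁻¹)
    (hσC : ∀ r : ℚ, σ (RatFunc.C r) = RatFunc.C r) (p : ℚ[X]) :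
    σ (algebraMap ℚ[X] (RatFunc ℚ) p) = Polynomial.aeval ((RatFunc.X : RatFunc ℚ))⁻¹ p := by
  induction p using Polynomial.induction_on with
  | C a => simp [RatFunc.algebraMap_C, hσC, RatFunc.algebraMap_eq_C]
  | add p q hp hq => simp [map_add, hp, hq]
  | monomial a n ih =>
      simp only [map_mul, map_pow, RatFunc.algebraMap_C, RatFunc.algebraMap_X,
        hσC, hσX, Polynomial.aeval_C, Polynomial.aeval_X, map_pow,
        RatFunc.algebraMap_eq_C]
      rw [eq_ratCast RatFunc.C, eq_ratCast (algebraMap ℚ (RatFunc ℚ))]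

private lemma aeval_inv_mul_pow (p : ℚ[X]) :
    Polynomial.aeval ((RatFunc.X : RatFunc ℚ))⁻¹ p * RatFunc.X ^ p.natDegree
      = algebraMap ℚ[X] (RatFunc ℚ) p.reverse := by
  have hX : (RatFunc.X : RatFunc ℚ) ≠ 0 := RatFunc.X_ne_zero
  have hXi : (((RatFunc.X : RatFunc ℚ))⁻¹ : RatFunc ℚ) ≠ 0 := inv_ne_zero hX
  haveI : Invertible (((RatFunc.X : RatFunc ℚ))⁻¹ : RatFunc ℚ) := invertibleOfNonzero hXi
  have h := Polynomial.eval₂_reverse_mul_pow (algebraMap ℚ (RatFunc ℚ))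
      (((RatFunc.X : RatFunc ℚ))⁻¹ : RatFunc ℚ) p
  rw [invOf_eq_inv, inv_inv] at h
  rw [← Polynomial.aeval_def, ← Polynomial.aeval_def] at h
  rw [algebraMap_eq_aeval, ← h]
  field_simp
  rw [one_div, inv_pow, inv_mul_cancel_right₀ (pow_ne_zero _ hX)]

theorem stmt_8 (σ : RatFunc ℚ ≃+* RatFunc ℚ)
    (hσX : σ RatFunc.X = (RatFunc.X)⁻¹)
    (hσC : ∀ r : ℚ, σ (RatFunc.C r) = RatFunc.C r) :
    (∀ f : RatFunc ℚ, f ≠ 0 → f * σ f ≠ -1) ∧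
    (∃ f : RatFunc ℚ, f ≠ 0 ∧ (-1 : RatFunc ℚ) ^ 2 = f * σ f) := by
  constructor
  · intro f hf heq
    set p := f.num with hp
    set q := f.denom with hq
    have hp0 : p ≠ 0 := RatFunc.num_ne_zero hf
    have hq0 : q ≠ 0 := f.denom_ne_zero
    have hfd : algebraMap ℚ[X] (RatFunc ℚ) p / algebraMap ℚ[X] (RatFunc ℚ) q = f :=
      RatFunc.num_div_denom f
    have hinj : Function.Injective (algebraMap ℚ[X] (RatFunc ℚ)) :=
      IsFractionRing.injective _ _
    have hap : algebraMap ℚ[X] (RatFunc ℚ) p ≠ 0 := fun h => hp0 (hinj (by simpa using h))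
    have haq : algebraMap ℚ[X] (RatFunc ℚ) q ≠ 0 := fun h => hq0 (hinj (by simpa using h))
    -- σ f in terms of p, q
    have hσf : σ f = Polynomial.aeval ((RatFunc.X : RatFunc ℚ))⁻¹ p / Polynomial.aeval ((RatFunc.X : RatFunc ℚ))⁻¹ q := by
      rw [← hfd, map_div₀, sigma_poly σ hσX hσC, sigma_poly σ hσX hσC]
    have hσq0 : Polynomial.aeval ((RatFunc.X : RatFunc ℚ))⁻¹ q ≠ 0 := by
      rw [← sigma_poly σ hσX hσC]
      exact fun h => haq (σ.injective (by simpa using h))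
    -- clear denominators
    have key : algebraMap ℚ[X] (RatFunc ℚ) p * Polynomial.aeval ((RatFunc.X : RatFunc ℚ))⁻¹ p
        = -(algebraMap ℚ[X] (RatFunc ℚ) q * Polynomial.aeval ((RatFunc.X : RatFunc ℚ))⁻¹ q) := by
      have h2 := heq
      rw [hσf, ← hfd, div_mul_div_comm, div_eq_iff (mul_ne_zero haq hσq0)] at h2
      linear_combination h2
    -- multiply through by X ^ (p.natDegree + q.natDegree)
    have key2 : algebraMap ℚ[X] (RatFunc ℚ) (p * p.reverse * Polynomial.X ^ q.natDegree)
        = algebraMap ℚ[X] (RatFunc ℚ) (-(q * q.reverse * Polynomial.X ^ p.natDegree)) := by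
      have h1 := aeval_inv_mul_pow p
      have h2 := aeval_inv_mul_pow q
      simp only [map_mul, map_pow, map_neg, RatFunc.algebraMap_X]
      rw [← h1, ← h2]
      linear_combination (RatFunc.X : RatFunc ℚ) ^ (p.natDegree + q.natDegree) * key
    have key3 : p * p.reverse * Polynomial.X ^ q.natDegree
        = -(q * q.reverse * Polynomial.X ^ p.natDegree) := hinj key2
    -- evaluate at 1
    have hev := congrArg (Polynomial.eval 1) key3
    simp only [Polynomial.eval_mul, Polynomial.eval_pow, Polynomial.eval_X,
      Polynomial.eval_neg, one_pow, mul_one, rev_eval_one] at hev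
    have hpe : p.eval 1 = 0 ∧ q.eval 1 = 0 := by
      constructor <;> nlinarith [sq_nonneg (p.eval 1), sq_nonneg (q.eval 1), hev]
    have hco : IsCoprime p q := f.isCoprime_num_denom
    have hmap := hco.map (Polynomial.evalRingHom (1 : ℚ))
    simp only [Polynomial.coe_evalRingHom, Polynomial.eval_eq_sum] at hmap
    exact not_isCoprime_zero_zero (by
      have : IsCoprime (p.eval 1) (q.eval 1) := hco.map (Polynomial.evalRingHom (1 : ℚ))
      rwa [hpe.1, hpe.2] at this)
  · exact ⟨1, one_ne_zero, by simp⟩
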